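/- Let e₁ and e₂ be REwLA terms over the set A of term variables, let V be the finite set of term variables occurring in e₁ or e₂, and let end' := (Σ_{a∈V} a^{∩i̅d})ᵃ (an REwLA+ term). Then SL(e₁) = SL(e₂) if and only if the equation e₁;end' = e₂;end' is valid on GRELfinlin, i.e., ⟦e₁;end'⟧ˢ = ⟦e₂;end'⟧ˢ for every generalized structure S whose universal relation is a finite linear order. -/

import Mathlib

/-! Statement 2: equivalence of languages with substitutions coincides with
validity of `e₁;end' = e₂;end'` on GRELfinlin, where
`end' = (Σ_{a∈V} a^{∩i̅d})ᵃ` is an REwLA+ term. -/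

/-- A generalized structure over term variables `A` and formula variables `P`,
with universe `W`. -/
structure GStruct (A P W : Type) where
  U : W → W → Prop
  rel : A → W → W → Prop
  rel_sub : ∀ a x y, rel a x y → U x y
  val : P → W → Prop

/-- The universal relation is a finite linear order (on a nonempty finite universe). -/
def FinLin {A P W : Type} (S : GStruct A P W) : Prop :=
  Nonempty W ∧ Finite W ∧ (∀ x, S.U x x) ∧
    (∀ x y z, S.U x y → S.U y z → S.U x z) ∧
    (∀ x y, S.U x y → S.U y x → x = y) ∧ (∀ x y, S.U x y ∨ S.U y x)

/-- Regular expressions with lookahead (REwLA). -/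
inductive RE (A : Type) : Type where
  | var : A → RE A
  | one : RE A
  | zero : RE A
  | comp : RE A → RE A → RE A
  | union : RE A → RE A → RE A
  | plus : RE A → RE A
  | adom : RE A → RE A

/-- Extended regular expressions with lookahead (REwLA+): REwLA together with the
restrictions to the identity (`capId`) and to its complement (`capNid`). -/
inductive REP (A : Type) : Type where
  | var : A → REP A
  | one : REP A
  | zero : REP A
  | comp : REP A → REP A → REP A
  | union : REP A → REP A → REP A
  | plus : REP A → REP A
  | adom : REP A → REP A
  | capId : REP A → REP A
  | capNid : REP A → REP A

/-- The evident embedding of REwLA into REwLA+. -/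
def RE.toREP {A : Type} : RE A → REP A
  | .var a => .var a
  | .one => .one
  | .zero => .zero
  | .comp e f => .comp e.toREP f.toREP
  | .union e f => .union e.toREP f.toREP
  | .plus e => .plus e.toREP
  | .adom e => .adom e.toREP

/-- Relational semantics of REwLA+ terms, given an interpretation `ρ` of term variables. -/
def repSem {A W : Type} (ρ : A → W → W → Prop) : REP A → W → W → Prop
  | .var a => ρ a
  | .one => fun x y => x = y
  | .zero => fun _ _ => False
  | .comp e f => fun x z => ∃ y, repSem ρ e x y ∧ repSem ρ f y z
  | .union e f => fun x y => repSem ρ e x y ∨ repSem ρ f x y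
  | .plus e => fun x y => Relation.TransGen (fun u v => repSem ρ e u v) x y
  | .adom e => fun x y => x = y ∧ ∀ z, ¬ repSem ρ e x z
  | .capId e => fun x y => repSem ρ e x y ∧ x = y
  | .capNid e => fun x y => repSem ρ e x y ∧ x ≠ y

/-- Interpretation of term variables in the word structure `S^w`. -/
def wordRel {A : Type} (w : List A) (a : A) (i j : Fin (w.length + 1)) : Prop :=
  (j : ℕ) = (i : ℕ) + 1 ∧ w[(i : ℕ)]? = some a

/-- The language of an REwLA term. -/
def reLang {A : Type} (e : RE A) : Set (List A) :=
  {w | repSem (wordRel w) e.toREP 0 (Fin.last w.length)}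

/-- Applying a substitution (of REwLA terms for term variables) to an REwLA term. -/
def reSubst {A : Type} (θ : A → RE A) : RE A → RE A
  | .var a => θ a
  | .one => .one
  | .zero => .zero
  | .comp e f => .comp (reSubst θ e) (reSubst θ f)
  | .union e f => .union (reSubst θ e) (reSubst θ f)
  | .plus e => .plus (reSubst θ e)
  | .adom e => .adom (reSubst θ e)

/-- The language with substitutions `SL(e) = ⋃_θ {θ} × L(eθ)`. -/
def SL {A : Type} (e : RE A) : Set ((A → RE A) × List A) :=
  {q | q.2 ∈ reLang (reSubst q.1 e)}

/-- The list of term variables occurring in an REwLA term. -/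
def reVars {A : Type} : RE A → List A
  | .var a => [a]
  | .one => []
  | .zero => []
  | .comp e f => reVars e ++ reVars f
  | .union e f => reVars e ++ reVars f
  | .plus e => reVars e
  | .adom e => reVars e

/-- The sum `0 + a₁^{∩i̅d} + ⋯ + aₖ^{∩i̅d}` over a list of term variables. -/
def sumCapNid {A : Type} (l : List A) : REP A :=
  l.foldr (fun a t => REP.union (REP.capNid (REP.var a)) t) REP.zero

section AuxLemmas

variable {A : Type}

/-- Generic forwardness of REwLA+ semantics. -/
lemma repSem_forward {W : Type} (U : W → W → Prop) (hrefl : ∀ x, U x x)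
    (htrans : ∀ x y z, U x y → U y z → U x z)
    (ρ : A → W → W → Prop) (hρ : ∀ a x y, ρ a x y → U x y) :
    ∀ (t : REP A) (x y : W), repSem ρ t x y → U x y := by
  intro t
  induction t with
  | var a => exact fun x y h => hρ a x y h
  | one => rintro x y rfl; exact hrefl x
  | zero => intro x y h; exact h.elim
  | comp e f ihe ihf =>
      rintro x y ⟨m, h1, h2⟩
      exact htrans _ _ _ (ihe _ _ h1) (ihf _ _ h2)
  | union e f ihe ihf =>
      rintro x y (h | h)
      · exact ihe _ _ h
      · exact ihf _ _ h
  | plus e ih =>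
      intro x y h
      induction h with
      | single h => exact ih _ _ h
      | tail _ h2 ih2 => exact htrans _ _ _ ih2 (ih _ _ h2)
  | adom e ih => rintro x y ⟨rfl, _⟩; exact hrefl x
  | capId e ih => rintro x y ⟨h, rfl⟩; exact hrefl x
  | capNid e ih => rintro x y ⟨h, _⟩; exact ih _ _ h

/-- Mapping a transitive-closure path along a function, staying inside a closed set. -/
lemma transGen_map {α β : Type} {r : α → α → Prop} {r' : β → β → Prop} (f : α → β)
    (Z : α → Prop) (hc : ∀ u v, Z u → r u v → Z v)
    (hmap : ∀ u v, Z u → Z v → r u v → r' (f u) (f v)) :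
    ∀ u v, Z u → Relation.TransGen r u v →
      Z v ∧ Relation.TransGen r' (f u) (f v) := by
  intro u v hu h
  revert hu
  induction h using Relation.TransGen.head_induction_on with
  | single h =>
      intro hu
      exact ⟨hc _ _ hu h, Relation.TransGen.single (hmap _ _ hu (hc _ _ hu h) h)⟩
  | head h' _ ih =>
      intro hu
      have hz := hc _ _ hu h'
      obtain ⟨hv, ht⟩ := ih hz
      exact ⟨hv, Relation.TransGen.head (hmap _ _ hu hz h') ht⟩

/-- Substitution lemma. -/
lemma subst_sem {W : Type} (σ : A → W → W → Prop) (θ : A → RE A) :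
    ∀ e : RE A,
      repSem σ (reSubst θ e).toREP
        = repSem (fun a => repSem σ (θ a).toREP) e.toREP := by
  intro e
  induction e with
  | var a => rfl
  | one => rfl
  | zero => rfl
  | comp e f ihe ihf =>
      funext x z
      simp only [reSubst, RE.toREP, repSem, ihe, ihf]
  | union e f ihe ihf =>
      funext x z
      simp only [reSubst, RE.toREP, repSem, ihe, ihf]
  | plus e ih =>
      funext x z
      simp only [reSubst, RE.toREP, repSem, ih]
  | adom e ih =>
      funext x z
      simp only [reSubst, RE.toREP, repSem, ih]

end AuxLemmas
section AuxLemmas2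

variable {A : Type}

/-- Boolean value of a variable-free term. -/
def bval : RE A → Bool
  | .var _ => false
  | .one => true
  | .zero => false
  | .comp e f => bval e && bval f
  | .union e f => bval e || bval f
  | .plus e => bval e
  | .adom e => !bval e

/-- Semantics of a term whose variables are all interpreted as empty. -/
lemma bval_sem {W : Type} (ρ : A → W → W → Prop) :
    ∀ e : RE A, (∀ a ∈ reVars e, ∀ x y : W, ¬ ρ a x y) →
      ∀ x y : W, repSem ρ e.toREP x y ↔ (bval e = true ∧ x = y) := by
  intro e
  induction e with
  | var a =>
      intro h x y
      simp only [RE.toREP, repSem, bval]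
      exact ⟨fun hr => (h a (by simp [reVars]) x y hr).elim, by simp⟩
  | one => intro _ x y; simp [RE.toREP, repSem, bval]
  | zero => intro _ x y; simp [RE.toREP, repSem, bval]
  | comp e f ihe ihf =>
      intro h x y
      have he := ihe (fun a ha => h a (by simp [reVars, ha]))
      have hf := ihf (fun a ha => h a (by simp [reVars, ha]))
      simp only [RE.toREP, repSem, bval, Bool.and_eq_true]
      constructor
      · rintro ⟨m, h1, h2⟩
        obtain ⟨b1, rfl⟩ := (he x m).1 h1
        obtain ⟨b2, rfl⟩ := (hf x y).1 h2
        exact ⟨⟨b1, b2⟩, rfl⟩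
      · rintro ⟨⟨b1, b2⟩, rfl⟩
        exact ⟨x, (he x x).2 ⟨b1, rfl⟩, (hf x x).2 ⟨b2, rfl⟩⟩
  | union e f ihe ihf =>
      intro h x y
      have he := ihe (fun a ha => h a (by simp [reVars, ha]))
      have hf := ihf (fun a ha => h a (by simp [reVars, ha]))
      simp only [RE.toREP, repSem, bval, Bool.or_eq_true]
      rw [he, hf]; tauto
  | plus e ih =>
      intro h x y
      have he := ih (fun a ha => h a (by simpa [reVars] using ha))
      simp only [RE.toREP, repSem, bval]
      constructor
      · intro hT
        induction hT with
        | single h1 => exact (he _ _).1 h1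
        | tail _ h2 ih2 =>
            obtain ⟨b, rfl⟩ := ih2
            exact ⟨b, ((he _ _).1 h2).2⟩
      · rintro ⟨b, rfl⟩
        exact Relation.TransGen.single ((he x x).2 ⟨b, rfl⟩)
  | adom e ih =>
      intro h x y
      have he := ih (fun a ha => h a (by simpa [reVars] using ha))
      simp only [RE.toREP, repSem, bval, Bool.not_eq_true']
      constructor
      · rintro ⟨rfl, hz⟩
        refine ⟨?_, rfl⟩
        by_contra hb
        exact hz x ((he x x).2 ⟨by simpa using hb, rfl⟩)
      · rintro ⟨hb, rfl⟩
        refine ⟨rfl, fun z hz => ?_⟩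
        obtain ⟨b, _⟩ := (he x z).1 hz
        simp [hb] at b

/-- Semantics of the sum of `capNid`s. -/
lemma sumCapNid_sem {W : Type} (ρ : A → W → W → Prop) (l : List A) (u v : W) :
    repSem ρ (sumCapNid l) u v ↔ ∃ a ∈ l, ρ a u v ∧ u ≠ v := by
  induction l with
  | nil => simp [sumCapNid, repSem]
  | cons a l ih =>
      simp only [sumCapNid, List.foldr_cons, repSem] at *
      rw [ih]; simp

/-- Semantics of composing with the `end` marker. -/
lemma comp_endT {W : Type} (ρ : A → W → W → Prop) (l : List A) (t : REP A) (x y : W) :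
    repSem ρ (REP.comp t (REP.adom (sumCapNid l))) x y ↔
      repSem ρ t x y ∧ ∀ a ∈ l, ∀ z, ¬ (ρ a y z ∧ y ≠ z) := by
  simp only [repSem]
  constructor
  · rintro ⟨m, h1, rfl, h2⟩
    refine ⟨h1, fun a ha z hz => h2 z ?_⟩
    rw [sumCapNid_sem]
    exact ⟨a, ha, hz⟩
  · rintro ⟨h1, h2⟩
    refine ⟨y, h1, rfl, fun z hz => ?_⟩
    rw [sumCapNid_sem] at hz
    obtain ⟨a, ha, hz⟩ := hz
    exact h2 a ha z hz

end AuxLemmas2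
section Master

variable {A : Type}

/-- Master transport lemma: semantics of REwLA terms is invariant under a bijection
between a closed subset `Z` of one structure and a closed subset `Z'` of another. -/
lemma master {W M : Type} (u₀ : W) (L : List A) (rel : A → W → W → Prop)
    (ρ : A → M → M → Prop) (Z : W → Prop) (Z' : M → Prop) (f : W → M)
    (hinj : ∀ u v, Z u → Z v → f u = f v → u = v)
    (hmem : ∀ u, Z u → Z' (f u))
    (hsurj : ∀ m, Z' m → ∃ u, Z u ∧ f u = m)
    (hfwd : ∀ a ∈ L, ∀ u v, Z u → rel a u v → Z v)
    (hfwd' : ∀ a ∈ L, ∀ m m', Z' m → ρ a m m' → Z' m')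
    (hrel : ∀ a ∈ L, ∀ u v, Z u → Z v → (rel a u v ↔ ρ a (f u) (f v))) :
    ∀ e : RE A, (∀ a ∈ reVars e, a ∈ L) →
      (∀ u v, Z u → repSem rel e.toREP u v → Z v) ∧
      (∀ m m', Z' m → repSem ρ e.toREP m m' → Z' m') ∧
      (∀ u v, Z u → Z v → (repSem rel e.toREP u v ↔ repSem ρ e.toREP (f u) (f v))) := by
  classical
  -- a choice inverse of f on Z'
  have hsurj' : ∀ m, Z' m → ∃ u, Z u ∧ f u = m := hsurj
  set f' : M → W := fun m => if hm : Z' m then (hsurj' m hm).choose else u₀ with hf'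
  have hf'spec : ∀ m, Z' m → Z (f' m) ∧ f (f' m) = m := by
    intro m hm
    simp only [hf', dif_pos hm]
    exact (hsurj' m hm).choose_spec
  have hf'f : ∀ u, Z u → f' (f u) = u := by
    intro u hu
    obtain ⟨hz, he⟩ := hf'spec (f u) (hmem u hu)
    exact hinj _ _ hz hu he
  intro e
  induction e with
  | var a =>
      intro hv
      have ha : a ∈ L := hv a (by simp [reVars])
      exact ⟨hfwd a ha, hfwd' a ha, fun u v hu hv' => hrel a ha u v hu hv'⟩
  | one =>
      refine fun _ => ⟨?_, ?_, ?_⟩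
      · rintro u v hu rfl; exact hu
      · rintro m m' hm rfl; exact hm
      · intro u v hu hv
        simp only [RE.toREP, repSem]
        exact ⟨fun h => by rw [h], fun h => hinj u v hu hv h⟩
  | zero =>
      exact fun _ => ⟨fun _ _ _ h => h.elim, fun _ _ _ h => h.elim,
        fun _ _ _ _ => ⟨fun h => h.elim, fun h => h.elim⟩⟩
  | comp e g ihe ihg =>
      intro hv
      obtain ⟨ce, ce', eqe⟩ := ihe (fun a ha => hv a (by simp [reVars, ha]))
      obtain ⟨cg, cg', eqg⟩ := ihg (fun a ha => hv a (by simp [reVars, ha]))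
      refine ⟨?_, ?_, ?_⟩
      · rintro u v hu ⟨m, h1, h2⟩; exact cg _ _ (ce _ _ hu h1) h2
      · rintro u v hu ⟨m, h1, h2⟩; exact cg' _ _ (ce' _ _ hu h1) h2
      · intro u v hu hv'
        simp only [RE.toREP, repSem]
        constructor
        · rintro ⟨m, h1, h2⟩
          have hm := ce _ _ hu h1
          exact ⟨f m, (eqe _ _ hu hm).1 h1, (eqg _ _ hm hv').1 h2⟩
        · rintro ⟨m, h1, h2⟩
          have hm' : Z' m := ce' _ _ (hmem u hu) h1
          obtain ⟨w, hw, rfl⟩ := hsurj m hm'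
          exact ⟨w, (eqe _ _ hu hw).2 h1, (eqg _ _ hw hv').2 h2⟩
  | union e g ihe ihg =>
      intro hv
      obtain ⟨ce, ce', eqe⟩ := ihe (fun a ha => hv a (by simp [reVars, ha]))
      obtain ⟨cg, cg', eqg⟩ := ihg (fun a ha => hv a (by simp [reVars, ha]))
      refine ⟨?_, ?_, ?_⟩
      · rintro u v hu (h | h)
        exacts [ce _ _ hu h, cg _ _ hu h]
      · rintro u v hu (h | h)
        exacts [ce' _ _ hu h, cg' _ _ hu h]
      · intro u v hu hv'
        simp only [RE.toREP, repSem]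
        rw [eqe _ _ hu hv', eqg _ _ hu hv']
  | plus e ihe =>
      intro hv
      obtain ⟨ce, ce', eqe⟩ := ihe (fun a ha => hv a (by simpa [reVars] using ha))
      have fortr : ∀ u v, Z u → Relation.TransGen (repSem rel e.toREP) u v → Z v := by
        intro u v hu h
        induction h with
        | single h => exact ce _ _ hu h
        | tail _ h2 ih2 => exact ce _ _ ih2 h2
      have fortr' : ∀ u v, Z' u → Relation.TransGen (repSem ρ e.toREP) u v → Z' v := by
        intro u v hu h
        induction h with
        | single h => exact ce' _ _ hu h
        | tail _ h2 ih2 => exact ce' _ _ ih2 h2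
      refine ⟨fortr, fortr', ?_⟩
      intro u v hu hv'
      simp only [RE.toREP, repSem]
      constructor
      · intro h
        exact (transGen_map f Z ce (fun u v hu hv h => (eqe u v hu hv).1 h) u v hu h).2
      · intro h
        have := (transGen_map f' Z' ce'
          (fun m m' hm hm' hr => by
            have h1 := hf'spec m hm
            have h2 := hf'spec m' hm'
            exact (eqe _ _ h1.1 h2.1).2 (by rw [h1.2, h2.2]; exact hr))
          (f u) (f v) (hmem u hu) h).2
        rwa [hf'f u hu, hf'f v hv'] at this
  | adom e ihe =>
      intro hv
      obtain ⟨ce, ce', eqe⟩ := ihe (fun a ha => hv a (by simpa [reVars] using ha))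
      refine ⟨?_, ?_, ?_⟩
      · rintro u v hu ⟨rfl, _⟩; exact hu
      · rintro u v hu ⟨rfl, _⟩; exact hu
      · intro u v hu hv'
        simp only [RE.toREP, repSem]
        constructor
        · rintro ⟨rfl, hz⟩
          refine ⟨rfl, fun m hm => ?_⟩
          have hm' : Z' m := ce' _ _ (hmem u hu) hm
          obtain ⟨w, hw, rfl⟩ := hsurj m hm'
          exact hz w ((eqe _ _ hu hw).2 hm)
        · rintro ⟨he, hz⟩
          have huv : u = v := hinj u v hu hv' he
          subst huv
          exact ⟨rfl, fun z hzz => hz (f z) ((eqe _ _ hu (ce _ _ hu hzz)).1 hzz)⟩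

end Master
section Realize
set_option linter.unusedSectionVars false

variable {A : Type}

/-- Iterated composition of a single letter. -/
def powT (a₀ : A) : ℕ → RE A
  | 0 => .one
  | k + 1 => .comp (.var a₀) (powT a₀ k)

/-- Term denoting the diagonal singleton `{(k,k)}` on a word of length `n`. -/
def diagT (a₀ : A) (n k : ℕ) : RE A :=
  .adom (.adom (.comp (powT a₀ (n - k)) (.adom (.var a₀))))

/-- Term denoting the singleton pair `{(i,j)}`. -/
def pairT (a₀ : A) (n i j : ℕ) : RE A :=
  .comp (diagT a₀ n i) (.comp (powT a₀ (j - i)) (diagT a₀ n j))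

/-- Finite union of terms. -/
def unionList : List (RE A) → RE A
  | [] => .zero
  | t :: ts => .union t (unionList ts)

lemma comp_sem {W : Type} (ρ : A → W → W → Prop) (s t : RE A) (x z : W) :
    repSem ρ (RE.comp s t).toREP x z ↔
      ∃ m, repSem ρ s.toREP x m ∧ repSem ρ t.toREP m z := Iff.rfl

lemma adom_sem {W : Type} (ρ : A → W → W → Prop) (t : RE A) (x y : W) :
    repSem ρ (RE.adom t).toREP x y ↔ x = y ∧ ∀ z, ¬ repSem ρ t.toREP x z := Iff.rfl

lemma union_sem {W : Type} (ρ : A → W → W → Prop) (s t : RE A) (x y : W) :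
    repSem ρ (RE.union s t).toREP x y ↔
      repSem ρ s.toREP x y ∨ repSem ρ t.toREP x y := Iff.rfl

variable (w : List A) (a₀ : A) (hw : ∀ i : ℕ, i < w.length → w[i]? = some a₀)

include hw

lemma step_sem (i j : Fin (w.length + 1)) :
    repSem (wordRel w) (RE.var a₀).toREP i j ↔ (j : ℕ) = (i : ℕ) + 1 := by
  simp only [RE.toREP, repSem, wordRel]
  constructor
  · rintro ⟨h, _⟩; exact h
  · intro h
    refine ⟨h, hw i ?_⟩
    have := j.isLt
    omega

lemma nosucc (l : Fin (w.length + 1)) :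
    (∀ v : Fin (w.length + 1), ¬ (v : ℕ) = (l : ℕ) + 1) ↔ (l : ℕ) = w.length := by
  constructor
  · intro h
    by_contra hne
    have := l.isLt
    exact h ⟨(l : ℕ) + 1, by omega⟩ rfl
  · intro h v hv
    have := v.isLt
    omega

lemma powT_sem (k : ℕ) (i j : Fin (w.length + 1)) :
    repSem (wordRel w) (powT a₀ k).toREP i j ↔ (j : ℕ) = (i : ℕ) + k := by
  induction k generalizing i with
  | zero =>
      simp only [powT, RE.toREP, repSem, Nat.add_zero]
      exact ⟨fun h => by rw [h], fun h => Fin.ext h.symm⟩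
  | succ k ih =>
      rw [powT, comp_sem]
      constructor
      · rintro ⟨m, h1, h2⟩
        rw [step_sem w a₀ hw] at h1
        rw [ih m] at h2
        omega
      · intro h
        have hj := j.isLt
        refine ⟨⟨(i : ℕ) + 1, by omega⟩, ?_, ?_⟩
        · rw [step_sem w a₀ hw]
        · rw [ih]
          show (j : ℕ) = (i : ℕ) + 1 + k
          omega

lemma diagT_sem (k : ℕ) (hk : k ≤ w.length) (i j : Fin (w.length + 1)) :
    repSem (wordRel w) (diagT a₀ w.length k).toREP i j ↔ i = j ∧ (i : ℕ) = k := by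
  simp only [diagT, adom_sem, comp_sem, step_sem w a₀ hw, powT_sem w a₀ hw,
    nosucc w a₀ hw]
  constructor
  · rintro ⟨rfl, h⟩
    refine ⟨rfl, ?_⟩
    have h2 := h i
    push_neg at h2
    obtain ⟨m, l, h3, -, h4⟩ := h2 rfl
    have := i.isLt
    omega
  · rintro ⟨rfl, hik⟩
    refine ⟨rfl, fun z hz => ?_⟩
    obtain ⟨rfl, hm⟩ := hz
    refine hm ⟨w.length, by omega⟩ ⟨⟨w.length, by omega⟩, ?_, rfl, rfl⟩
    show w.length = (i : ℕ) + (w.length - k)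
    omega

lemma pairT_sem (p q : Fin (w.length + 1)) (hpq : (p : ℕ) ≤ (q : ℕ)) (u v : Fin (w.length + 1)) :
    repSem (wordRel w) (pairT a₀ w.length (p : ℕ) (q : ℕ)).toREP u v ↔ u = p ∧ v = q := by
  have hp : (p : ℕ) ≤ w.length := by have := p.isLt; omega
  have hq : (q : ℕ) ≤ w.length := by have := q.isLt; omega
  simp only [pairT, comp_sem, diagT_sem w a₀ hw _ hp, diagT_sem w a₀ hw _ hq,
    powT_sem w a₀ hw]
  constructor
  · rintro ⟨m, ⟨rfl, h1⟩, l, h2, rfl, h3⟩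
    exact ⟨Fin.ext h1, Fin.ext h3⟩
  · rintro ⟨rfl, rfl⟩
    exact ⟨u, ⟨rfl, rfl⟩, v, by omega, rfl, rfl⟩

lemma unionList_sem {W : Type} (ρ : A → W → W → Prop) (ts : List (RE A)) (x y : W) :
    repSem ρ (unionList ts).toREP x y ↔ ∃ t ∈ ts, repSem ρ t.toREP x y := by
  induction ts with
  | nil => simp [unionList, RE.toREP, repSem]
  | cons t ts ih =>
      rw [unionList, union_sem, ih]
      simp

open scoped Classical in
/-- A term denoting an arbitrary forward relation on the word structure. -/
noncomputable def termOfRel (a₀ : A) (n : ℕ) (R : Fin (n + 1) → Fin (n + 1) → Prop) : RE A :=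
  unionList ((Finset.univ.filter
      (fun p : Fin (n + 1) × Fin (n + 1) => R p.1 p.2)).toList.map
    (fun p => pairT a₀ n (p.1 : ℕ) (p.2 : ℕ)))

lemma termOfRel_sem (R : Fin (w.length + 1) → Fin (w.length + 1) → Prop)
    (hR : ∀ i j, R i j → (i : ℕ) ≤ (j : ℕ)) (u v : Fin (w.length + 1)) :
    repSem (wordRel w) (termOfRel a₀ w.length R).toREP u v ↔ R u v := by
  classical
  rw [termOfRel, unionList_sem w a₀ hw]
  constructor
  · rintro ⟨t, ht, hsem⟩
    simp only [List.mem_map, Finset.mem_toList, Finset.mem_filter, Finset.mem_univ,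
      true_and] at ht
    obtain ⟨p, hp, rfl⟩ := ht
    rw [pairT_sem w a₀ hw p.1 p.2 (hR _ _ hp)] at hsem
    obtain ⟨rfl, rfl⟩ := hsem
    exact hp
  · intro h
    refine ⟨pairT a₀ w.length (u : ℕ) (v : ℕ), ?_, ?_⟩
    · simp only [List.mem_map, Finset.mem_toList, Finset.mem_filter, Finset.mem_univ,
        true_and]
      exact ⟨(u, v), h, rfl⟩
    · exact (pairT_sem w a₀ hw u v (hR _ _ h) u v).2 ⟨rfl, rfl⟩

end Realize
theorem SL_equiv_iff_valid_on_finlin {A P : Type} [DecidableEq A] (e₁ e₂ : RE A)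
    (endT : REP A)
    (hend : endT = REP.adom (sumCapNid ((reVars e₁ ++ reVars e₂).dedup))) :
    SL e₁ = SL e₂ ↔
      ∀ (W : Type) (S : GStruct A P W), FinLin S →
        ∀ x y : W,
          repSem S.rel (REP.comp e₁.toREP endT) x y ↔
            repSem S.rel (REP.comp e₂.toREP endT) x y := by
  classical
  subst hend
  set Vl : List A := (reVars e₁ ++ reVars e₂).dedup with hVl
  have hv1 : ∀ a ∈ reVars e₁, a ∈ Vl := by
    intro a ha; rw [hVl]; exact List.mem_dedup.2 (List.mem_append.2 (Or.inl ha))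
  have hv2 : ∀ a ∈ reVars e₂, a ∈ Vl := by
    intro a ha; rw [hVl]; exact List.mem_dedup.2 (List.mem_append.2 (Or.inr ha))
  constructor
  · -- completeness direction
    intro hSL W S hS x y
    obtain ⟨hne, hfin, hrefl, htrans, hanti, htot⟩ := hS
    rw [comp_endT, comp_endT]
    by_cases hEnd : ∀ a ∈ Vl, ∀ z, ¬ (S.rel a y z ∧ y ≠ z)
    · refine and_congr_left' ?_
      by_cases hU : S.U x y
      · rcases hVlist : Vl with - | ⟨a₀, rest⟩
        · -- no variables at all: terms are constant
          have hnil : reVars e₁ ++ reVars e₂ = [] :=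
            (List.dedup_eq_nil _).1 (hVl.symm.trans hVlist)
          obtain ⟨h1, h2⟩ := List.append_eq_nil_iff.1 hnil
          rw [bval_sem S.rel e₁ (by rw [h1]; simp) x y,
            bval_sem S.rel e₂ (by rw [h2]; simp) x y]
          have hmem := Set.ext_iff.1 hSL (fun _ => RE.zero, [])
          simp only [SL, Set.mem_setOf_eq, reLang] at hmem
          rw [subst_sem, subst_sem] at hmem
          rw [bval_sem (fun _ => repSem (wordRel ([] : List A)) (RE.zero : RE A).toREP) e₁
              (fun a _ u v h => h),
            bval_sem (fun _ => repSem (wordRel ([] : List A)) (RE.zero : RE A).toREP) e₂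
              (fun a _ u v h => h)] at hmem
          have h01 : (0 : Fin 1) = Fin.last ([] : List A).length := rfl
          have hbb : (bval e₁ = true) ↔ (bval e₂ = true) :=
            ⟨fun hb => (hmem.1 ⟨hb, h01⟩).1, fun hb => (hmem.2 ⟨hb, h01⟩).1⟩
          constructor
          · rintro ⟨hb, rfl⟩; exact ⟨hbb.1 hb, rfl⟩
          · rintro ⟨hb, rfl⟩; exact ⟨hbb.2 hb, rfl⟩
        · -- main construction
          haveI : Finite W := hfin
          set Z : W → Prop := fun z => S.U x z ∧ (x = y → z = x) with hZdef
          have hZx : Z x := ⟨hrefl x, fun _ => rfl⟩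
          have hZy : Z y := ⟨hU, fun h => h.symm⟩
          have hZc : ∀ a ∈ Vl, ∀ u v, Z u → S.rel a u v → Z v := by
            intro a ha u v hu huv
            refine ⟨htrans _ _ _ hu.1 (S.rel_sub a u v huv), fun hxy => ?_⟩
            have hux : u = x := hu.2 hxy
            subst hux
            by_contra hvx
            apply hEnd a ha v
            constructor
            · rw [← hxy]; exact huv
            · rw [← hxy]; exact fun h => hvx h.symm
          let Zt := {z : W // Z z}
          letI : LinearOrder Zt :=
            { le := fun u v => (v : W) = y ∨ ((u : W) ≠ y ∧ S.U u v)
              le_refl := by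
                intro u
                by_cases h : (u : W) = y
                · exact Or.inl h
                · exact Or.inr ⟨h, hrefl u⟩
              le_trans := by
                rintro u v t huv (h' | ⟨h1', h2'⟩)
                · exact Or.inl h'
                · rcases huv with h | ⟨h1, h2⟩
                  · exact absurd h h1'
                  · exact Or.inr ⟨h1, htrans _ _ _ h2 h2'⟩
              le_antisymm := by
                rintro u v huv hvu
                rcases huv with h | ⟨h1, h2⟩
                · rcases hvu with h' | ⟨h1', h2'⟩
                  · exact Subtype.ext (h'.trans h.symm)
                  · exact absurd h h1'
                · rcases hvu with h' | ⟨h1', h2'⟩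
                  · exact absurd h' h1
                  · exact Subtype.ext (hanti _ _ h2 h2')
              le_total := by
                intro u v
                by_cases h : (v : W) = y
                · exact Or.inl (Or.inl h)
                · by_cases h' : (u : W) = y
                  · exact Or.inr (Or.inl h')
                  · rcases htot (u : W) v with ht | ht
                    · exact Or.inl (Or.inr ⟨h', ht⟩)
                    · exact Or.inr (Or.inr ⟨h, ht⟩)
              toDecidableLE := Classical.decRel _ }
          haveI : Fintype Zt := Fintype.ofFinite _
          have hcard : 1 ≤ Fintype.card Zt := Fintype.card_pos_iff.2 ⟨⟨x, hZx⟩⟩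
          set w : List A := List.replicate (Fintype.card Zt - 1) a₀ with hwdef
          have hwlen : Fintype.card Zt = w.length + 1 := by
            rw [hwdef, List.length_replicate]; omega
          have g : Fin (w.length + 1) ≃o Zt := Fintype.orderIsoFinOfCardEq Zt hwlen
          have hbot : ∀ u : Zt, (⟨x, hZx⟩ : Zt) ≤ u := by
            intro u
            by_cases h : (u : W) = y
            · exact Or.inl h
            · by_cases hxy : x = y
              · exact absurd ((u.2.2 hxy).trans hxy) h
              · exact Or.inr ⟨hxy, u.2.1⟩
          have htop : ∀ u : Zt, u ≤ (⟨y, hZy⟩ : Zt) := fun u => Or.inl rfl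
          have hg0 : g.symm ⟨x, hZx⟩ = 0 := by
            have h1 : g.symm ⟨x, hZx⟩ ≤ g.symm (g 0) := g.symm.le_iff_le.2 (hbot (g 0))
            rw [g.symm_apply_apply] at h1
            exact Fin.le_zero_iff.1 h1
          have hglast : g.symm ⟨y, hZy⟩ = Fin.last w.length := by
            have h1 : g.symm (g (Fin.last w.length)) ≤ g.symm ⟨y, hZy⟩ :=
              g.symm.le_iff_le.2 (htop _)
            rw [g.symm_apply_apply] at h1
            exact Fin.last_le_iff.1 h1
          have hrelle : ∀ a ∈ Vl, ∀ u v : Zt, S.rel a u v → u ≤ v := by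
            intro a ha u v h
            by_cases hvy : (v : W) = y
            · exact Or.inl hvy
            · by_cases huy : (u : W) = y
              · exfalso
                apply hEnd a ha (v : W)
                refine ⟨by rwa [huy] at h, fun he => hvy he.symm⟩
              · exact Or.inr ⟨huy, S.rel_sub _ _ _ h⟩
          have hRfwd : ∀ a ∈ Vl, ∀ i j : Fin (w.length + 1),
              S.rel a ((g i : Zt) : W) ((g j : Zt) : W) → (i : ℕ) ≤ (j : ℕ) := by
            intro a ha i j h
            exact Fin.le_def.1 (g.le_iff_le.1 (hrelle a ha (g i) (g j) h))
          have hwspec : ∀ i : ℕ, i < w.length → w[i]? = some a₀ := by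
            intro i hi
            rw [hwdef] at hi ⊢
            rw [List.length_replicate] at hi
            simp [List.getElem?_replicate, hi]
          set θ : A → RE A := fun a =>
            if ha : a ∈ Vl then
              termOfRel a₀ w.length (fun i j => S.rel a ((g i : Zt) : W) ((g j : Zt) : W))
            else RE.zero with hθdef
          have hθ : ∀ a ∈ Vl, ∀ i j : Fin (w.length + 1),
              repSem (wordRel w) ((θ a).toREP) i j ↔
                S.rel a ((g i : Zt) : W) ((g j : Zt) : W) := by
            intro a ha i j
            have hθa : θ a = termOfRel a₀ w.length
                (fun i j => S.rel a ((g i : Zt) : W) ((g j : Zt) : W)) := by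
              rw [hθdef]; exact dif_pos ha
            rw [hθa]
            exact termOfRel_sem w a₀ hwspec _ (hRfwd a ha) i j
          set f : W → Fin (w.length + 1) :=
            fun u => if hu : Z u then g.symm ⟨u, hu⟩ else 0 with hfdef
          have hfZ : ∀ u (hu : Z u), f u = g.symm ⟨u, hu⟩ := by
            intro u hu; rw [hfdef]; exact dif_pos hu
          have hinj : ∀ u v, Z u → Z v → f u = f v → u = v := by
            intro u v hu hv h
            rw [hfZ u hu, hfZ v hv] at h
            exact Subtype.ext_iff.1 (g.symm.injective h)
          have hsurjf : ∀ m : Fin (w.length + 1), True → ∃ u, Z u ∧ f u = m := by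
            intro m _
            refine ⟨((g m : Zt) : W), (g m).2, ?_⟩
            rw [hfZ _ (g m).2]
            exact g.symm_apply_apply m
          have hrelf : ∀ a ∈ Vl, ∀ u v, Z u → Z v →
              (S.rel a u v ↔
                repSem (wordRel w) ((θ a).toREP) (f u) (f v)) := by
            intro a ha u v hu hv
            rw [hfZ u hu, hfZ v hv, hθ a ha]
            simp only [OrderIso.apply_symm_apply]
          have hmaster := fun (e : RE A) (he : ∀ a ∈ reVars e, a ∈ Vl) =>
            master x Vl S.rel
              (fun a i j => repSem (wordRel w) ((θ a).toREP) i j)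
              Z (fun _ => True) f
              hinj (fun _ _ => trivial) hsurjf hZc (fun _ _ _ _ _ _ => trivial)
              hrelf e he
          have h1 := (hmaster e₁ hv1).2.2 x y hZx hZy
          have h2 := (hmaster e₂ hv2).2.2 x y hZx hZy
          rw [hfZ x hZx, hfZ y hZy, hg0, hglast] at h1 h2
          have hSLi := Set.ext_iff.1 hSL (θ, w)
          simp only [SL, Set.mem_setOf_eq, reLang] at hSLi
          rw [subst_sem, subst_sem] at hSLi
          rw [h1, h2]
          exact hSLi
      · exact iff_of_false
          (fun h => hU (repSem_forward S.U hrefl htrans S.rel S.rel_sub _ x y h))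
          (fun h => hU (repSem_forward S.U hrefl htrans S.rel S.rel_sub _ x y h))
    · exact iff_of_false (fun h => hEnd h.2) (fun h => hEnd h.2)
  · -- soundness direction
    intro hval
    ext q
    obtain ⟨θ, w⟩ := q
    simp only [SL, Set.mem_setOf_eq, reLang]
    rw [subst_sem, subst_sem]
    have hfwdw : ∀ (t : REP A) (i j : Fin (w.length + 1)),
        repSem (wordRel w) t i j → i ≤ j := by
      refine repSem_forward (· ≤ ·) (fun i => le_refl i) (fun i j k h h' => le_trans h h')
        (wordRel w) ?_
      intro a i j h
      obtain ⟨h1, -⟩ := h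
      exact Fin.le_def.2 (by omega)
    have hfl : FinLin (P := P)
        { U := ((· ≤ ·) : Fin (w.length + 1) → Fin (w.length + 1) → Prop)
          rel := fun a i j => repSem (wordRel w) ((θ a).toREP) i j
          rel_sub := fun a i j h => hfwdw _ i j h
          val := fun _ _ => False } :=
      ⟨⟨0⟩, inferInstance, fun i => le_refl i, fun i j k h h' => le_trans h h',
        fun i j h h' => le_antisymm h h', fun i j => le_total i j⟩
    have h := hval _ _ hfl 0 (Fin.last w.length)
    rw [comp_endT, comp_endT] at h
    have hEnd : ∀ a ∈ Vl, ∀ z : Fin (w.length + 1),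
        ¬ (repSem (wordRel w) ((θ a).toREP) (Fin.last w.length) z ∧
            Fin.last w.length ≠ z) := by
      rintro a ha z ⟨h1, h2⟩
      exact h2 (Fin.last_le_iff.1 (hfwdw _ _ _ h1)).symm
    rw [and_iff_left hEnd, and_iff_left hEnd] at h
    exact h
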